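/- If A is a polytope in ℝⁿ whose interior contains the origin 0, then the polar dual A* is also a polytope whose interior contains 0, and A** = A. -/

import Mathlib

open RealInnerProductSpace

/-- The polar dual of `A ⊆ ℝⁿ` with respect to the origin. -/
def polarDual {n : ℕ} (A : Set (EuclideanSpace ℝ (Fin n))) :
    Set (EuclideanSpace ℝ (Fin n)) :=
  {b | ∀ a ∈ A, ⟪a, b⟫ ≤ 1}

/-- A polytope: the convex hull of a finite set of points. -/
def IsPolytope {n : ℕ} (A : Set (EuclideanSpace ℝ (Fin n))) : Prop :=
  ∃ S : Set (EuclideanSpace ℝ (Fin n)), S.Finite ∧ A = convexHull ℝ S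

namespace PolarAux

variable {n : ℕ}

local notation "E" => EuclideanSpace ℝ (Fin n)

lemma polarDual_eq_iInter (A : Set (EuclideanSpace ℝ (Fin n))) :
    polarDual A = ⋂ a ∈ A, {b : EuclideanSpace ℝ (Fin n) | ⟪a, b⟫ ≤ 1} := by
  ext b; simp [polarDual]

lemma polarDual_convexHull (S : Set (EuclideanSpace ℝ (Fin n))) :
    polarDual (convexHull ℝ S) = polarDual S := by
  ext b
  constructor
  · intro hb a ha; exact hb a (subset_convexHull ℝ S ha)
  · intro hb a ha
    have hconv : Convex ℝ {a : EuclideanSpace ℝ (Fin n) | ⟪a, b⟫ ≤ 1} :=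
      convex_halfSpace_le ⟨fun x y => inner_add_left x y b,
        fun c x => real_inner_smul_left x b c⟩ 1
    exact convexHull_min hb hconv ha

lemma convex_polarDual (A : Set (EuclideanSpace ℝ (Fin n))) : Convex ℝ (polarDual A) := by
  rw [polarDual_eq_iInter]
  exact convex_iInter fun a => convex_iInter fun _ =>
    convex_halfSpace_le ⟨fun x y => inner_add_right a x y,
      fun c x => real_inner_smul_right a x c⟩ 1

lemma isClosed_polarDual (A : Set (EuclideanSpace ℝ (Fin n))) : IsClosed (polarDual A) := by
  rw [polarDual_eq_iInter]
  exact isClosed_biInter fun a _ =>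
    isClosed_le (Continuous.inner continuous_const continuous_id) continuous_const

lemma zero_mem_polarDual (A : Set (EuclideanSpace ℝ (Fin n))) :
    (0 : EuclideanSpace ℝ (Fin n)) ∈ polarDual A := by
  intro a _; simp

/-- If `A` contains a ball around the origin, the polar dual is bounded. -/
lemma polarDual_subset_closedBall {A : Set (EuclideanSpace ℝ (Fin n))} {ε : ℝ} (hε : 0 < ε)
    (hball : Metric.ball (0 : EuclideanSpace ℝ (Fin n)) ε ⊆ A) :
    polarDual A ⊆ Metric.closedBall (0 : EuclideanSpace ℝ (Fin n)) (2 / ε) := by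
  intro b hb
  rcases eq_or_ne b 0 with rfl | hb0
  · simp; positivity
  · have hnb : 0 < ‖b‖ := norm_pos_iff.mpr hb0
    set a : EuclideanSpace ℝ (Fin n) := ((ε / 2) * ‖b‖⁻¹) • b with ha_def
    have hna : ‖a‖ = ε / 2 := by
      rw [ha_def, norm_smul, Real.norm_eq_abs, abs_of_pos (by positivity)]
      field_simp
    have haA : a ∈ A := by
      apply hball
      simp only [Metric.mem_ball, dist_zero_right, hna]
      linarith
    have h1 : ⟪a, b⟫ ≤ 1 := hb a haA
    rw [ha_def, real_inner_smul_left, real_inner_self_eq_norm_sq] at h1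
    have : ε / 2 * ‖b‖ ≤ 1 := by
      have : ε / 2 * ‖b‖⁻¹ * (‖b‖ * ‖b‖) = ε / 2 * ‖b‖ := by field_simp
      calc ε / 2 * ‖b‖ = ε / 2 * ‖b‖⁻¹ * (‖b‖ * ‖b‖) := this.symm
        _ ≤ 1 := by rw [← sq]; exact h1
    simp only [Metric.mem_closedBall, dist_zero_right]
    rw [le_div_iff₀ hε]
    nlinarith

/-- If `A` is bounded, the origin is in the interior of the polar dual. -/
lemma zero_mem_interior_polarDual {A : Set (EuclideanSpace ℝ (Fin n))} {R : ℝ} (hR : 0 < R)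
    (hA : A ⊆ Metric.closedBall (0 : EuclideanSpace ℝ (Fin n)) R) :
    (0 : EuclideanSpace ℝ (Fin n)) ∈ interior (polarDual A) := by
  rw [mem_interior_iff_mem_nhds, Metric.mem_nhds_iff]
  refine ⟨R⁻¹, by positivity, ?_⟩
  intro b hb a ha
  simp only [Metric.mem_ball, dist_zero_right] at hb
  have hna : ‖a‖ ≤ R := by simpa [Metric.mem_closedBall, dist_zero_right] using hA ha
  calc ⟪a, b⟫ ≤ ‖a‖ * ‖b‖ := real_inner_le_norm a b
    _ ≤ R * ‖b‖ := by nlinarith [norm_nonneg b]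
    _ ≤ R * R⁻¹ := by nlinarith
    _ = 1 := by field_simp

/-- Bipolar theorem for closed convex sets containing the origin. -/
lemma bipolar {A : Set (EuclideanSpace ℝ (Fin n))} (hconv : Convex ℝ A)
    (hclosed : IsClosed A) (h0 : (0 : EuclideanSpace ℝ (Fin n)) ∈ A) :
    polarDual (polarDual A) = A := by
  apply Set.Subset.antisymm
  · intro b hb
    by_contra hbA
    obtain ⟨f, u, hfa, hub⟩ := geometric_hahn_banach_closed_point hconv hclosed hbA
    have hu0 : 0 < u := by simpa using hfa 0 h0
    set c := (InnerProductSpace.toDual ℝ (EuclideanSpace ℝ (Fin n))).symm f with hc_def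
    have hc : ∀ y : EuclideanSpace ℝ (Fin n), ⟪c, y⟫ = f y := fun y =>
      InnerProductSpace.toDual_symm_apply
    have hmem : u⁻¹ • c ∈ polarDual A := by
      intro a ha
      rw [real_inner_smul_right, real_inner_comm, hc]
      have := hfa a ha
      rw [inv_mul_le_iff₀ hu0]
      linarith
    have hle : ⟪u⁻¹ • c, b⟫ ≤ 1 := hb _ hmem
    rw [real_inner_smul_left, hc] at hle
    rw [inv_mul_le_iff₀ hu0] at hle
    linarith
  · intro a ha b hb
    rw [real_inner_comm]
    exact hb a ha

/-- The extreme points of the polar dual of a finite set are finite. -/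
lemma finite_extremePoints_polarDual {S : Set (EuclideanSpace ℝ (Fin n))} (hS : S.Finite) :
    (Set.extremePoints ℝ (polarDual S)).Finite := by
  set P := polarDual S with hP
  -- key: active constraints of an extreme point span everything
  have key : ∀ x ∈ Set.extremePoints ℝ P, ∀ v : EuclideanSpace ℝ (Fin n),
      (∀ a ∈ S, ⟪a, x⟫ = 1 → ⟪a, v⟫ = 0) → v = 0 := by
    intro x hx v hv
    by_contra hv0
    have hnv : 0 < ‖v‖ := norm_pos_iff.mpr hv0
    obtain ⟨hxP, hxext⟩ := mem_extremePoints.mp hx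
    set Sb : Set (EuclideanSpace ℝ (Fin n)) := {a ∈ S | ⟪a, x⟫ < 1} with hSb
    have hUopen : IsOpen (⋂ a ∈ Sb, {y : EuclideanSpace ℝ (Fin n) | ⟪a, y⟫ < 1}) := by
      refine Set.Finite.isOpen_biInter (hS.subset (Set.sep_subset _ _)) fun a _ => ?_
      exact isOpen_lt (Continuous.inner continuous_const continuous_id) continuous_const
    have hxU : x ∈ ⋂ a ∈ Sb, {y : EuclideanSpace ℝ (Fin n) | ⟪a, y⟫ < 1} := by
      simp only [Set.mem_iInter]
      intro a ha
      exact ha.2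
    obtain ⟨δ, hδ, hball⟩ := Metric.isOpen_iff.mp hUopen x hxU
    set w : EuclideanSpace ℝ (Fin n) := (δ / (2 * ‖v‖)) • v with hw_def
    have hw0 : w ≠ 0 := by
      rw [hw_def]
      exact smul_ne_zero (by positivity) hv0
    have hnw : ‖w‖ = δ / 2 := by
      rw [hw_def, norm_smul, Real.norm_eq_abs, abs_of_pos (by positivity)]
      field_simp
    have hmemP : ∀ s : ℝ, |s| = 1 → x + s • w ∈ P := by
      intro s hs a ha
      rcases lt_or_ge ⟪a, x⟫ 1 with hlt | hge
      · have : x + s • w ∈ Metric.ball x δ := by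
          simp only [Metric.mem_ball, dist_eq_norm]
          have : x + s • w - x = s • w := by abel
          rw [this, norm_smul, Real.norm_eq_abs, hs, hnw]
          simp; linarith
        have := hball this
        simp only [Set.mem_iInter] at this
        exact le_of_lt (this a ⟨ha, hlt⟩)
      · have heq : ⟪a, x⟫ = 1 := le_antisymm (hxP a ha) hge
        have hav : ⟪a, v⟫ = 0 := hv a ha heq
        have : ⟪a, w⟫ = 0 := by rw [hw_def, real_inner_smul_right, hav]; ring
        rw [inner_add_right, heq, real_inner_smul_right, this]
        simp
    have h1 : x - w ∈ P := by
      have := hmemP (-1) (by simp)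
      simpa [neg_smul, sub_eq_add_neg] using this
    have h2 : x + w ∈ P := by simpa using hmemP 1 (by simp)
    have hseg : x ∈ openSegment ℝ (x - w) (x + w) := by
      refine ⟨1/2, 1/2, by norm_num, by norm_num, by norm_num, ?_⟩
      module
    have := (hxext _ h1 _ h2 hseg).1
    apply hw0
    have : x - w - x = 0 := by rw [this]; abel
    simpa [sub_sub_cancel_left, neg_eq_zero] using this
  -- injectivity of the active-set map
  have hinj : Set.InjOn (fun x : EuclideanSpace ℝ (Fin n) => {a ∈ S | ⟪a, x⟫ = 1})
      (Set.extremePoints ℝ P) := by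
    intro x hx y hy hxy
    have hzero : x - y = 0 := by
      apply key x hx
      intro a ha h1
      have hmem : a ∈ (fun x : EuclideanSpace ℝ (Fin n) => {a ∈ S | ⟪a, x⟫ = 1}) x :=
        ⟨ha, h1⟩
      rw [hxy] at hmem
      have h2 : ⟪a, y⟫ = 1 := hmem.2
      rw [inner_sub_right, h1, h2]; ring
    have := sub_eq_zero.mp hzero
    exact this
  apply Set.Finite.of_finite_image _ hinj
  apply Set.Finite.subset hS.finite_subsets
  rintro T ⟨x, _, rfl⟩
  exact Set.sep_subset _ _

end PolarAux

/-- If `A` is a polytope whose interior contains the origin, then `A*` is a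
polytope whose interior contains the origin, and `A** = A`. -/
theorem polarDual_polytope (n : ℕ) (A : Set (EuclideanSpace ℝ (Fin n)))
    (hA : IsPolytope A) (h0 : (0 : EuclideanSpace ℝ (Fin n)) ∈ interior A) :
    IsPolytope (polarDual A) ∧
    (0 : EuclideanSpace ℝ (Fin n)) ∈ interior (polarDual A) ∧
    polarDual (polarDual A) = A := by
  obtain ⟨S, hSfin, rfl⟩ := hA
  have hAcompact : IsCompact (convexHull ℝ S) := hSfin.isCompact_convexHull ℝ
  have hAconv : Convex ℝ (convexHull ℝ S) := convex_convexHull ℝ S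
  have hAclosed : IsClosed (convexHull ℝ S) := hAcompact.isClosed
  -- a ball inside A
  obtain ⟨ε, hε, hball⟩ := Metric.mem_nhds_iff.mp (mem_interior_iff_mem_nhds.mp h0)
  have h0A : (0 : EuclideanSpace ℝ (Fin n)) ∈ convexHull ℝ S := interior_subset h0
  -- A bounded
  obtain ⟨R, hRpos, hAR⟩ : ∃ R : ℝ, 0 < R ∧
      convexHull ℝ S ⊆ Metric.closedBall (0 : EuclideanSpace ℝ (Fin n)) R := by
    obtain ⟨R, hR⟩ := hAcompact.isBounded.subset_closedBall (0 : EuclideanSpace ℝ (Fin n))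
    exact ⟨max R 1, lt_of_lt_of_le one_pos (le_max_right _ _),
      hR.trans (Metric.closedBall_subset_closedBall (le_max_left _ _))⟩
  set P := polarDual (convexHull ℝ S) with hPdef
  have hPS : P = polarDual S := PolarAux.polarDual_convexHull S
  have hPconv : Convex ℝ P := PolarAux.convex_polarDual _
  have hPclosed : IsClosed P := PolarAux.isClosed_polarDual _
  have hPcompact : IsCompact P :=
    (isCompact_closedBall (0 : EuclideanSpace ℝ (Fin n)) (2 / ε)).of_isClosed_subset hPclosed
      (PolarAux.polarDual_subset_closedBall hε hball)
  have hPext : (Set.extremePoints ℝ P).Finite := by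
    rw [hPS]
    exact PolarAux.finite_extremePoints_polarDual hSfin
  have hPpoly : IsPolytope P := by
    refine ⟨Set.extremePoints ℝ P, hPext, ?_⟩
    have hKM := closure_convexHull_extremePoints hPcompact hPconv
    rw [← (hPext.isCompact_convexHull ℝ).isClosed.closure_eq]
    exact hKM.symm
  refine ⟨hPpoly, PolarAux.zero_mem_interior_polarDual hRpos hAR, ?_⟩
  exact PolarAux.bipolar hAconv hAclosed h0A
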